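/- If V : [0,∞) → ℝ is nonnegative, differentiable, nonincreasing, and V̇(t) ≤ −(1/2)e(t)ᵀQe(t) with Q positive definite and e uniformly continuous, then e(t) → 0 as t → ∞ (Barbalat-type lemma). -/

import Mathlib

open Matrix Filter

/-- A positive definite real matrix has a uniform quadratic lower bound on
the Euclidean norm. -/
theorem quadLB_aux {n : ℕ} (Q : Matrix (Fin n) (Fin n) ℝ) (hQ : Q.PosDef) (hn : 0 < n) :
    ∃ c > 0, ∀ x : EuclideanSpace ℝ (Fin n), c * ‖x‖^2 ≤ (x : Fin n → ℝ) ⬝ᵥ Q.mulVec x := by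
  have hcont : Continuous fun x : EuclideanSpace ℝ (Fin n) => (x : Fin n → ℝ) ⬝ᵥ Q.mulVec x := by
    simp only [dotProduct, Matrix.mulVec]
    fun_prop
  haveI : Nontrivial (EuclideanSpace ℝ (Fin n)) :=
    Module.nontrivial_of_finrank_pos (R := ℝ) (by simpa using hn)
  obtain ⟨x₀, hx₀⟩ := NormedSpace.sphere_nonempty (E := EuclideanSpace ℝ (Fin n)) (x := 0) (r := 1) |>.mpr zero_le_one
  obtain ⟨z, hz, hmin⟩ := (isCompact_sphere (0 : EuclideanSpace ℝ (Fin n)) 1).exists_isMinOn ⟨x₀, hx₀⟩ hcont.continuousOn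
  have hznorm : ‖z‖ = 1 := by simpa using hz
  have hzne : (z : Fin n → ℝ) ≠ 0 := by
    intro h
    have : z = 0 := by ext i; exact congrFun h i
    simp [this] at hznorm
  have hpos : 0 < (z : Fin n → ℝ) ⬝ᵥ Q.mulVec z := by simpa using hQ.dotProduct_mulVec_pos hzne
  have smul_form : ∀ (a : ℝ) (v : Fin n → ℝ), (a • v) ⬝ᵥ Q.mulVec (a • v) = a^2 * (v ⬝ᵥ Q.mulVec v) := by
    intro a v
    rw [smul_dotProduct, Matrix.mulVec_smul, dotProduct_smul, smul_eq_mul, smul_eq_mul]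
    ring
  refine ⟨_, hpos, fun x => ?_⟩
  rcases eq_or_ne x 0 with rfl | hx
  · simp [Matrix.mulVec_zero]
  · have hxn : (0:ℝ) < ‖x‖ := norm_pos_iff.mpr hx
    set a := ‖x‖ with ha
    set y : EuclideanSpace ℝ (Fin n) := a⁻¹ • x with hy
    have hysph : y ∈ Metric.sphere (0 : EuclideanSpace ℝ (Fin n)) 1 := by
      simp only [Metric.mem_sphere, dist_zero_right, hy, norm_smul, norm_inv, norm_norm, ← ha,
        Real.norm_eq_abs, abs_of_pos hxn]
      field_simp
    have hle : (z : Fin n → ℝ) ⬝ᵥ Q.mulVec z ≤ (y : Fin n → ℝ) ⬝ᵥ Q.mulVec y := hmin hysph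
    have hyx : (y : Fin n → ℝ) ⬝ᵥ Q.mulVec y = a⁻¹^2 * ((x : Fin n → ℝ) ⬝ᵥ Q.mulVec x) := by
      have hcoe : (y : Fin n → ℝ) = a⁻¹ • (x : Fin n → ℝ) := by
        funext i; simp [hy]
      rw [hcoe, smul_form]
    calc (z : Fin n → ℝ) ⬝ᵥ Q.mulVec z * a^2
        ≤ (a⁻¹^2 * ((x : Fin n → ℝ) ⬝ᵥ Q.mulVec x)) * a^2 :=
          mul_le_mul_of_nonneg_right (hle.trans_eq hyx) (by positivity)
      _ = (x : Fin n → ℝ) ⬝ᵥ Q.mulVec x := by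
          field_simp

/-- Barbalat-type lemma: if `V` is nonnegative, differentiable, nonincreasing
on `[0,∞)` with `V̇(t) ≤ −(1/2)e(t)ᵀQe(t)` for positive definite `Q` and a
uniformly continuous `e`, then `e(t) → 0` as `t → ∞`. -/
theorem stmt13 {n : ℕ}
    (Q : Matrix (Fin n) (Fin n) ℝ) (hQs : Q.IsSymm) (hQ : Q.PosDef)
    (e : ℝ → EuclideanSpace ℝ (Fin n))
    (he : UniformContinuousOn e (Set.Ici 0))
    (V : ℝ → ℝ) (hVdiff : Differentiable ℝ V)
    (hVpos : ∀ t, 0 ≤ t → 0 ≤ V t)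
    (hVmono : AntitoneOn V (Set.Ici 0))
    (hV' : ∀ t, 0 ≤ t →
      deriv V t ≤ -(1/2) * ((e t : Fin n → ℝ) ⬝ᵥ Q.mulVec (e t))) :
    Tendsto e atTop (nhds 0) := by
  rcases Nat.eq_zero_or_pos n with hn | hn
  · subst hn
    have he0 : e = fun _ => 0 := by
      funext t; ext i; exact i.elim0
    rw [he0]; exact tendsto_const_nhds
  obtain ⟨c, hc, hQc⟩ := quadLB_aux Q hQ hn
  by_contra hcon
  rw [Metric.tendsto_atTop] at hcon
  push_neg at hcon
  obtain ⟨ε, hε, hcon⟩ := hcon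
  -- uniform continuity modulus
  obtain ⟨δ, hδ, hδe⟩ := Metric.uniformContinuousOn_iff.mp he (ε/2) (by positivity)
  set κ := (1/2) * (c * (ε/2)^2) with hκ
  have hκpos : 0 < κ := by positivity
  -- drop lemma: near any point where `‖e‖ ≥ ε`, `V` drops by a fixed amount
  have drop : ∀ a, 0 ≤ a → ε ≤ ‖e a‖ → V (a + δ/2) ≤ V a - (δ/2) * κ := by
    intro a ha hea
    obtain ⟨x, hxmem, hx⟩ := exists_deriv_eq_slope V (by linarith : a < a + δ/2)
      hVdiff.continuous.continuousOn hVdiff.differentiableOn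
    have hx0 : (0:ℝ) ≤ x := le_of_lt (lt_of_le_of_lt ha hxmem.1)
    have hdist : dist x a < δ := by
      rw [Real.dist_eq, abs_of_pos (by linarith [hxmem.1] : (0:ℝ) < x - a)]
      linarith [hxmem.2]
    have hee : dist (e x) (e a) < ε/2 := hδe x hx0 a ha hdist
    have henx : ε/2 ≤ ‖e x‖ := by
      have h1 : ‖e a‖ - ‖e x‖ ≤ ‖e a - e x‖ := norm_sub_norm_le _ _
      rw [dist_eq_norm] at hee
      have := norm_sub_rev (e x) (e a)
      linarith [hee, h1, this ▸ hee]
    have hquad : c * (ε/2)^2 ≤ (e x : Fin n → ℝ) ⬝ᵥ Q.mulVec (e x) := by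
      calc c * (ε/2)^2 ≤ c * ‖e x‖^2 := by
            apply mul_le_mul_of_nonneg_left _ (le_of_lt hc)
            exact pow_le_pow_left₀ (by positivity) henx 2
        _ ≤ _ := hQc (e x)
    have hderiv : deriv V x ≤ -κ := by
      have := hV' x hx0
      rw [hκ]; nlinarith
    have hslope : (V (a + δ/2) - V a) / (δ/2) ≤ -κ := by
      rw [show a + δ/2 - a = δ/2 by ring] at hx
      rw [← hx]; exact hderiv
    have hδ2 : (0:ℝ) < δ/2 := by linarith
    have := (div_le_iff₀ hδ2).mp hslope
    linarith
  -- recursively build a sequence of points spaced by at least δ/2 with ‖e‖ ≥ ε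
  have step : ∀ N : ℝ, ∃ t, max N 0 ≤ t ∧ ε ≤ ‖e t‖ := by
    intro N
    obtain ⟨t, ht, htb⟩ := hcon (max N 0)
    refine ⟨t, ht, ?_⟩
    rwa [dist_zero_right] at htb
  choose f hf1 hf2 using step
  let s : ℕ → ℝ := fun k => Nat.rec (f 0) (fun _ prev => f (prev + δ/2)) k
  have hs0 : ∀ k, 0 ≤ s k := by
    intro k
    cases k with
    | zero => exact le_trans (le_max_right 0 0) (hf1 0)
    | succ m => exact le_trans (le_max_right _ 0) (hf1 _)
  have hse : ∀ k, ε ≤ ‖e (s k)‖ := by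
    intro k
    cases k with
    | zero => exact hf2 0
    | succ m => exact hf2 _
  have hstep : ∀ k, s k + δ/2 ≤ s (k+1) := by
    intro k
    exact le_trans (le_max_left _ 0) (hf1 (s k + δ/2))
  -- total descent of V along the sequence
  have key : ∀ k : ℕ, V (s k) ≤ V (s 0) - k * ((δ/2) * κ) := by
    intro k
    induction k with
    | zero => simp
    | succ m ih =>
      have h1 : V (s m + δ/2) ≤ V (s m) - (δ/2) * κ := drop (s m) (hs0 m) (hse m)
      have h2 : V (s (m+1)) ≤ V (s m + δ/2) :=
        hVmono (by simp [Set.mem_Ici]; linarith [hs0 m, hδ] : s m + δ/2 ∈ Set.Ici (0:ℝ))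
          (Set.mem_Ici.mpr (hs0 (m+1))) (hstep m)
      push_cast
      push_cast at ih
      linarith
  obtain ⟨k, hk⟩ := exists_nat_gt (V (s 0) / ((δ/2) * κ))
  have hδκ : (0:ℝ) < (δ/2) * κ := by positivity
  have : V (s 0) < k * ((δ/2) * κ) := (div_lt_iff₀ hδκ).mp hk
  have := key k
  have := hVpos (s k) (hs0 k)
  linarith
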